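/- Let G and H be finite abelian groups, let d = |G| and m = |H| + 1, and let f : G → H be differentially 1-uniform. For each complex-valued additive character ψ of H, define vectors v_{ψ,χ} ∈ ℂ^G (one for each additive character χ of G) by v_{ψ,χ}(x) = χ(x)·ψ(f(x))/√d for x ∈ G. Then: (i) for each ψ, the set B_ψ = {v_{ψ,χ} : χ an additive character of G} is an orthonormal basis of ℂ^G; and (ii) the family consisting of the standard basis B_0 = {δ_x : x ∈ G} with weight w_0 = 1/(d(d+1)), together with the |H| bases B_ψ each with weight w_ψ = 1/(|H|(d+1)), forms a weighted 2-design: the sum of w_a w_b |⟨u, v⟩|^4 over all ordered pairs of design elements u ∈ B_a, v ∈ B_b (a, b ranging over {0} ∪ {characters of H}) equals 2/(d(d+1)). -/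

import Mathlib

/-- A function `f : G → H` between additive groups is differentially 1-uniform if for
every `(a, b) ≠ (0, 0)` the equation `f (x + a) - f x = b` has at most one solution. -/
def DiffOneUniform {G H : Type*} [AddGroup G] [AddGroup H] (f : G → H) : Prop :=
  ∀ a : G, ∀ b : H, ¬(a = 0 ∧ b = 0) →
    ∀ x y : G, f (x + a) - f x = b → f (y + a) - f y = b → x = y

/-- The vector `v_{ψ,χ} ∈ ℂ^G` with entries `v_{ψ,χ}(x) = χ(x)·ψ(f(x))/√|G|`. -/
noncomputable def charVec {G H : Type*} [AddCommGroup G] [Fintype G] [AddCommGroup H]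
    (f : G → H) (ψ : AddChar H ℂ) (χ : AddChar G ℂ) : EuclideanSpace ℂ G :=
  (WithLp.equiv 2 (G → ℂ)).symm fun x =>
    χ x * ψ (f x) / (Real.sqrt (Fintype.card G) : ℂ)

open Complex Finset

section Aux
variable {G H : Type*} [AddCommGroup G] [Fintype G] [AddCommGroup H] [Fintype H]

lemma charVec_apply (f : G → H) (ψ : AddChar H ℂ) (χ : AddChar G ℂ) (x : G) :
    charVec f ψ χ x = χ x * ψ (f x) / (Real.sqrt (Fintype.card G) : ℂ) := rfl

/-- the unnormalized character sum -/
noncomputable def charSum (f : G → H) (ψ : AddChar H ℂ) (χ : AddChar G ℂ) : ℂ :=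
  ∑ x : G, χ x * ψ (f x)

lemma sqrt_mul_self' : ((Real.sqrt (Fintype.card G) : ℂ)) * (Real.sqrt (Fintype.card G) : ℂ)
    = (Fintype.card G : ℂ) := by
  rw [← Complex.ofReal_mul, Real.mul_self_sqrt (Nat.cast_nonneg _)]
  norm_num

lemma inner_charVec (f : G → H) (ψ ψ' : AddChar H ℂ) (χ χ' : AddChar G ℂ) :
    (inner ℂ (charVec f ψ χ) (charVec f ψ' χ') : ℂ)
      = charSum f (ψ' - ψ) (χ' - χ) / (Fintype.card G : ℂ) := by
  rw [PiLp.inner_apply, charSum, Finset.sum_div]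
  refine Finset.sum_congr rfl fun x _ => ?_
  simp only [charVec_apply, RCLike.inner_apply, map_div₀, map_inv₀, map_mul, Complex.conj_ofReal,
    AddChar.sub_apply', ← AddChar.inv_apply_eq_conj, div_eq_mul_inv, ← sqrt_mul_self' (G := G)]
  field_simp

end Aux

section Aux2
set_option linter.unusedSectionVars false
variable {G H : Type*} [AddCommGroup G] [Fintype G] [AddCommGroup H] [Fintype H]

lemma inner_charVec_same (f : G → H) (ψ : AddChar H ℂ) (χ χ' : AddChar G ℂ) :
    (inner ℂ (charVec f ψ χ) (charVec f ψ χ') : ℂ) = if χ = χ' then 1 else 0 := by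
  classical
  rw [inner_charVec, charSum]
  simp only [sub_self, AddChar.zero_apply, mul_one]
  rw [AddChar.sum_eq_ite]
  by_cases h : χ = χ'
  · subst h; simp
  · rw [if_neg (sub_ne_zero.mpr (Ne.symm h)), if_neg h, zero_div]

lemma charVec_orthonormal (f : G → H) (ψ : AddChar H ℂ) :
    Orthonormal ℂ (charVec f ψ) := by
  rw [orthonormal_iff_ite]
  intro χ χ'
  rw [inner_charVec_same]

noncomputable def charBasis (f : G → H) (ψ : AddChar H ℂ) :
    OrthonormalBasis (AddChar G ℂ) ℂ (EuclideanSpace ℂ G) :=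
  (basisOfLinearIndependentOfCardEqFinrank
    (charVec_orthonormal f ψ).linearIndependent
    (by simp [finrank_euclideanSpace])).toOrthonormalBasis
    (by rw [coe_basisOfLinearIndependentOfCardEqFinrank]
        exact charVec_orthonormal f ψ)

lemma charBasis_apply (f : G → H) (ψ : AddChar H ℂ) (χ : AddChar G ℂ) :
    charBasis f ψ χ = charVec f ψ χ := by
  have := congrFun (Module.Basis.coe_toOrthonormalBasis (basisOfLinearIndependentOfCardEqFinrank
    (charVec_orthonormal f ψ).linearIndependent (by simp [finrank_euclideanSpace]))
    (by rw [coe_basisOfLinearIndependentOfCardEqFinrank]; exact charVec_orthonormal f ψ)) χ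
  rw [charBasis, this, coe_basisOfLinearIndependentOfCardEqFinrank]

end Aux2

section Aux3
set_option linter.unusedSectionVars false
variable {G H : Type*} [AddCommGroup G] [Fintype G] [AddCommGroup H] [Fintype H]

lemma char_four (χ : AddChar G ℂ) (x z y w : G) :
    χ x * χ z * ((starRingEnd ℂ) (χ y) * (starRingEnd ℂ) (χ w)) = χ (x + z - y - w) := by
  rw [AddChar.map_sub_eq_div, AddChar.map_sub_eq_div, AddChar.map_add_eq_mul,
    ← AddChar.inv_apply_eq_conj, ← AddChar.inv_apply_eq_conj, div_eq_mul_inv, div_eq_mul_inv]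
  ring

lemma charSum_expand (f : G → H) (ψ : AddChar H ℂ) (χ : AddChar G ℂ) :
    (charSum f ψ χ) * (starRingEnd ℂ) (charSum f ψ χ)
      * ((charSum f ψ χ) * (starRingEnd ℂ) (charSum f ψ χ))
    = ∑ x : G, ∑ y : G, ∑ z : G, ∑ w : G,
        χ (x + z - y - w) * ψ (f x + f z - f y - f w) := by
  simp only [charSum, map_sum, map_mul, Finset.mul_sum, Finset.sum_mul]
  rw [Finset.sum_comm]
  refine Finset.sum_congr rfl fun x _ => ?_
  refine Finset.sum_congr rfl fun y _ => ?_
  rw [Finset.sum_comm]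
  refine Finset.sum_congr rfl fun z _ => ?_
  refine Finset.sum_congr rfl fun w _ => ?_
  rw [← char_four χ x z y w, ← char_four ψ (f x) (f z) (f y) (f w)]
  ring

end Aux3

section Aux4
set_option linter.unusedSectionVars false
variable {G H : Type*} [AddCommGroup G] [Fintype G] [AddCommGroup H] [Fintype H]
  [DecidableEq G] [DecidableEq H]

lemma count_inner (f : G → H) (hf : DiffOneUniform f) (x y : G) :
    (∑ z : G, ∑ w : G,
        if x + z - y - w = 0 ∧ f x + f z - f y - f w = 0 then (1:ℂ) else 0)
      = if y = x then (Fintype.card G : ℂ) else 1 := by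
  classical
  have h1 : ∀ z : G, (∑ w : G,
      if x + z - y - w = 0 ∧ f x + f z - f y - f w = 0 then (1:ℂ) else 0)
      = if f x + f z - f y - f (x + z - y) = 0 then 1 else 0 := by
    intro z
    have : ∀ w : G, (if x + z - y - w = 0 ∧ f x + f z - f y - f w = 0 then (1:ℂ) else 0)
        = if w = x + z - y then (if f x + f z - f y - f (x + z - y) = 0 then (1:ℂ) else 0)
          else 0 := by
      intro w
      by_cases hw : w = x + z - y
      · subst hw; simp
      · rw [if_neg hw, if_neg]
        rintro ⟨h, -⟩
        exact hw (sub_eq_zero.mp h).symm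
    rw [Finset.sum_congr rfl fun w _ => this w, Finset.sum_ite_eq' Finset.univ,
      if_pos (Finset.mem_univ _)]
  rw [Finset.sum_congr rfl fun z _ => h1 z]
  by_cases hxy : y = x
  · have hc : ∀ z : G, f x + f z - f y - f (x + z - y) = 0 := by
      intro z
      rw [hxy]
      have : x + z - x = z := by abel
      rw [this]; abel
    rw [if_pos hxy]
    rw [Finset.sum_congr rfl fun z _ => if_pos (hc z), Finset.sum_const, Finset.card_univ]
    simp
  · have key : ∀ z : G, (f x + f z - f y - f (x + z - y) = 0) ↔ z = y := by
      intro z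
      constructor
      · intro hP
        have ha : y - x ≠ 0 := sub_ne_zero.mpr hxy
        have e1 : f (x + (y - x)) - f x = f y - f x := by
          have : x + (y - x) = y := by abel
          rw [this]
        have e2 : f ((z - (y - x)) + (y - x)) - f (z - (y - x)) = f y - f x := by
          have h3 : (z - (y - x)) + (y - x) = z := by abel
          have h4 : z - (y - x) = x + z - y := by abel
          rw [h3, h4]
          have := sub_eq_zero.mp hP
          -- f x + f z - f y = f (x + z - y)
          have h5 : f x + f z - f y - f (x + z - y) = 0 := hP
          have : f z - f (x + z - y) = f y - f x := by
            have := h5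
            apply sub_eq_sub_iff_sub_eq_sub.mp
            · rw [sub_eq_zero] at h5
              rw [← h5]; abel
          exact this
        have hxz := hf (y - x) (f y - f x) (fun h => ha h.1) x (z - (y - x)) e1 e2
        rw [eq_sub_iff_add_eq] at hxz
        rw [← hxz]; abel
      · intro hz
        rw [hz]
        have : x + y - y = x := by abel
        rw [this]; abel
    simp only [fun z => propext (key z)]
    rw [Finset.sum_ite_eq' Finset.univ, if_pos (Finset.mem_univ _), if_neg hxy]

end Aux4

section Aux5
set_option linter.unusedSectionVars false
variable {G H : Type*} [AddCommGroup G] [Fintype G] [AddCommGroup H] [Fintype H]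
  [DecidableEq G] [DecidableEq H]

lemma norm_pow_four_eq (z : ℂ) :
    ((‖z‖ ^ 4 : ℝ) : ℂ) = z * (starRingEnd ℂ) z * (z * (starRingEnd ℂ) z) := by
  rw [Complex.mul_conj, ← Complex.ofReal_mul]
  congr 1
  rw [← Complex.sq_norm]
  ring

lemma sum_swap4 {α β : Type*} [Fintype α] [Fintype β] (F : β → α → α → α → α → ℂ) :
    ∑ b : β, ∑ x : α, ∑ y : α, ∑ z : α, ∑ w : α, F b x y z w
      = ∑ x : α, ∑ y : α, ∑ z : α, ∑ w : α, ∑ b : β, F b x y z w := by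
  rw [Finset.sum_comm]
  refine Finset.sum_congr rfl fun x _ => ?_
  rw [Finset.sum_comm]
  refine Finset.sum_congr rfl fun y _ => ?_
  rw [Finset.sum_comm]
  refine Finset.sum_congr rfl fun z _ => ?_
  rw [Finset.sum_comm]

lemma moment_four (f : G → H) (hf : DiffOneUniform f) :
    ∑ ψ : AddChar H ℂ, ∑ χ : AddChar G ℂ, (‖charSum f ψ χ‖ : ℝ) ^ 4
      = (Fintype.card G : ℝ) ^ 2 * (Fintype.card H : ℝ)
          * (2 * (Fintype.card G : ℝ) - 1) := by
  have key : ∑ ψ : AddChar H ℂ, ∑ χ : AddChar G ℂ, ((‖charSum f ψ χ‖ ^ 4 : ℝ) : ℂ)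
      = (Fintype.card G : ℂ) ^ 2 * (Fintype.card H : ℂ)
          * (2 * (Fintype.card G : ℂ) - 1) := by
    simp only [norm_pow_four_eq, charSum_expand]
    have step1 : ∀ ψ : AddChar H ℂ,
        ∑ χ : AddChar G ℂ, ∑ x : G, ∑ y : G, ∑ z : G, ∑ w : G,
            χ (x + z - y - w) * ψ (f x + f z - f y - f w)
        = ∑ x : G, ∑ y : G, ∑ z : G, ∑ w : G,
            (if x + z - y - w = 0 then (Fintype.card G : ℂ) else 0)
              * ψ (f x + f z - f y - f w) := by
      intro ψ
      rw [sum_swap4]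
      refine Finset.sum_congr rfl fun x _ => Finset.sum_congr rfl fun y _ =>
        Finset.sum_congr rfl fun z _ => Finset.sum_congr rfl fun w _ => ?_
      rw [← Finset.sum_mul, AddChar.sum_apply_eq_ite]
    rw [Finset.sum_congr rfl fun ψ _ => step1 ψ, sum_swap4]
    have step2 : ∀ x y z w : G,
        ∑ ψ : AddChar H ℂ, (if x + z - y - w = 0 then (Fintype.card G : ℂ) else 0)
            * ψ (f x + f z - f y - f w)
        = (Fintype.card G : ℂ) * (Fintype.card H : ℂ)
            * (if x + z - y - w = 0 ∧ f x + f z - f y - f w = 0 then 1 else 0) := by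
      intro x y z w
      rw [← Finset.mul_sum, AddChar.sum_apply_eq_ite]
      by_cases hA : x + z - y - w = 0
      · by_cases hB : f x + f z - f y - f w = 0
        · rw [if_pos hA, if_pos hB, if_pos ⟨hA, hB⟩]; ring
        · have hc : ¬(x + z - y - w = 0 ∧ f x + f z - f y - f w = 0) := fun h => hB h.2
          rw [if_pos hA, if_neg hB, if_neg hc]; ring
      · have hc : ¬(x + z - y - w = 0 ∧ f x + f z - f y - f w = 0) := fun h => hA h.1
        rw [if_neg hA, if_neg hc]
        simp
    rw [Finset.sum_congr rfl fun x _ => Finset.sum_congr rfl fun y _ =>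
      Finset.sum_congr rfl fun z _ => Finset.sum_congr rfl fun w _ => step2 x y z w]
    simp only [← Finset.mul_sum]
    rw [Finset.sum_congr rfl fun x _ => Finset.sum_congr rfl fun y _ =>
      count_inner f hf x y]
    have step3 : ∀ x : G, ∑ y : G, (if y = x then (Fintype.card G : ℂ) else 1)
        = 2 * (Fintype.card G : ℂ) - 1 := by
      intro x
      have : ∀ y : G, (if y = x then (Fintype.card G : ℂ) else 1)
          = (if y = x then (Fintype.card G : ℂ) - 1 else 0) + 1 := by
        intro y; split_ifs <;> ring
      rw [Finset.sum_congr rfl fun y _ => this y, Finset.sum_add_distrib,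
        Finset.sum_ite_eq' Finset.univ, if_pos (Finset.mem_univ _),
        Finset.sum_const, Finset.card_univ]
      push_cast; ring
    rw [Finset.sum_congr rfl fun x _ => step3 x, Finset.sum_const, Finset.card_univ]
    push_cast; ring
  have := Complex.ofReal_injective (a₁ := ∑ ψ : AddChar H ℂ, ∑ χ : AddChar G ℂ,
    (‖charSum f ψ χ‖ : ℝ) ^ 4) (a₂ := (Fintype.card G : ℝ) ^ 2 * (Fintype.card H : ℝ)
          * (2 * (Fintype.card G : ℝ) - 1)) (by exact_mod_cast key)
  exact this

end Aux5

section Main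
set_option linter.unusedSectionVars false
set_option maxHeartbeats 1000000
variable {G H : Type*} [AddCommGroup G] [Fintype G] [DecidableEq G] [AddCommGroup H] [Fintype H]

lemma reparam {α : Type*} [AddCommGroup α] [Fintype α] (g : α → ℝ) (ψ : α) :
    ∑ ψ' : α, g (ψ' - ψ) = ∑ τ : α, g τ :=
  Fintype.sum_equiv (Equiv.subRight ψ) _ _ (fun _ => rfl)

end Main

/-- **Weighted 2-designs from differentially 1-uniform functions.** If `f : G → H` is
differentially 1-uniform, then (i) for each additive character `ψ` of `H` the vectors
`v_{ψ,χ}` form an orthonormal basis of `ℂ^G`; and (ii) the standard basis with weight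
`1/(d(d+1))` together with the `|H|` bases `B_ψ`, each with weight `1/(|H|(d+1))`,
forms a weighted 2-design (Welch-bound characterization). -/
theorem two_design_from_diffOneUniform {G H : Type*}
    [AddCommGroup G] [Fintype G] [DecidableEq G] [AddCommGroup H] [Fintype H]
    (f : G → H) (hf : DiffOneUniform f) :
    (∀ ψ : AddChar H ℂ, ∃ b : OrthonormalBasis (AddChar G ℂ) ℂ (EuclideanSpace ℂ G),
        ∀ χ, b χ = charVec f ψ χ) ∧
    (let d : ℝ := Fintype.card G
     let w0 : ℝ := (d * (d + 1))⁻¹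
     let w1 : ℝ := ((Fintype.card H : ℝ) * (d + 1))⁻¹
     (∑ x : G, ∑ y : G, w0 * w0 *
          ‖(inner ℂ (EuclideanSpace.single x (1 : ℂ)) (EuclideanSpace.single y (1 : ℂ)) : ℂ)‖ ^ 4)
       + (∑ ψ : AddChar H ℂ, ∑ x : G, ∑ χ : AddChar G ℂ,
          (w0 * w1 * ‖(inner ℂ (EuclideanSpace.single x (1 : ℂ)) (charVec f ψ χ) : ℂ)‖ ^ 4
           + w1 * w0 * ‖(inner ℂ (charVec f ψ χ) (EuclideanSpace.single x (1 : ℂ)) : ℂ)‖ ^ 4))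
       + (∑ ψ : AddChar H ℂ, ∑ ψ' : AddChar H ℂ, ∑ χ : AddChar G ℂ, ∑ χ' : AddChar G ℂ,
          w1 * w1 * ‖(inner ℂ (charVec f ψ χ) (charVec f ψ' χ') : ℂ)‖ ^ 4)
       = 2 / (d * (d + 1))) := by
  constructor
  · intro ψ
    exact ⟨charBasis f ψ, fun χ => charBasis_apply f ψ χ⟩
  · classical
  intro d w0 w1
  have hd0 : (0:ℝ) < d := by
    simpa [d] using Fintype.card_pos (α := G)
  have hH0 : (0:ℝ) < (Fintype.card H : ℝ) := Nat.cast_pos.mpr Fintype.card_pos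
  -- Term A
  have TA : (∑ x : G, ∑ y : G, w0 * w0 *
      ‖(inner ℂ (EuclideanSpace.single x (1 : ℂ)) (EuclideanSpace.single y (1 : ℂ)) : ℂ)‖ ^ 4)
      = w0 * w0 * d := by
    have hxy : ∀ x y : G, w0 * w0 *
        ‖(inner ℂ (EuclideanSpace.single x (1 : ℂ)) (EuclideanSpace.single y (1 : ℂ)) : ℂ)‖ ^ 4
        = if x = y then w0 * w0 else 0 := by
      intro x y
      rw [EuclideanSpace.inner_single_left, EuclideanSpace.single_apply]
      by_cases h : x = y
      · rw [if_pos h, if_pos h]; simp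
      · rw [if_neg h, if_neg h]; simp
    rw [Finset.sum_congr rfl fun x _ => Finset.sum_congr rfl fun y _ => hxy x y]
    simp [Finset.sum_ite_eq Finset.univ, d, mul_comm]
  -- norm of inner with charVec
  have hsq4 : (Real.sqrt (Fintype.card G)) ^ 4 = d ^ 2 := by
    rw [show (4:ℕ) = 2*2 from rfl, pow_mul, Real.sq_sqrt (by positivity)]
  have TBa : ∀ (ψ : AddChar H ℂ) (χ : AddChar G ℂ) (x : G),
      ‖(inner ℂ (EuclideanSpace.single x (1 : ℂ)) (charVec f ψ χ) : ℂ)‖ ^ 4 = (d ^ 2)⁻¹ := by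
    intro ψ χ x
    rw [EuclideanSpace.inner_single_left, map_one, one_mul, charVec_apply, norm_div, norm_mul,
      AddChar.norm_apply, AddChar.norm_apply, Complex.norm_real,
      Real.norm_of_nonneg (Real.sqrt_nonneg _), one_mul, div_pow, one_pow, hsq4, one_div]
  have TBb : ∀ (ψ : AddChar H ℂ) (χ : AddChar G ℂ) (x : G),
      ‖(inner ℂ (charVec f ψ χ) (EuclideanSpace.single x (1 : ℂ)) : ℂ)‖ ^ 4 = (d ^ 2)⁻¹ := by
    intro ψ χ x
    rw [← norm_inner_symm]
    exact TBa ψ χ x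
  have TB : (∑ ψ : AddChar H ℂ, ∑ x : G, ∑ χ : AddChar G ℂ,
      (w0 * w1 * ‖(inner ℂ (EuclideanSpace.single x (1 : ℂ)) (charVec f ψ χ) : ℂ)‖ ^ 4
       + w1 * w0 * ‖(inner ℂ (charVec f ψ χ) (EuclideanSpace.single x (1 : ℂ)) : ℂ)‖ ^ 4))
      = (Fintype.card H : ℝ) * d * d * (2 * (w0 * w1 * (d ^ 2)⁻¹)) := by
    rw [Finset.sum_congr rfl fun ψ _ => Finset.sum_congr rfl fun x _ =>
      Finset.sum_congr rfl fun χ _ => by rw [TBa ψ χ x, TBb ψ χ x]]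
    simp only [Finset.sum_const, Finset.card_univ, AddChar.card_eq, nsmul_eq_mul]
    show (Fintype.card H : ℝ) * ((Fintype.card G : ℝ) * ((Fintype.card G : ℝ) * _)) = _
    ring
  -- Term C
  have TCa : ∀ (ψ ψ' : AddChar H ℂ) (χ χ' : AddChar G ℂ),
      w1 * w1 * ‖(inner ℂ (charVec f ψ χ) (charVec f ψ' χ') : ℂ)‖ ^ 4
      = w1 * w1 * (‖charSum f (ψ' - ψ) (χ' - χ)‖ ^ 4 / d ^ 4) := by
    intro ψ ψ' χ χ'
    rw [inner_charVec, norm_div, div_pow, Complex.norm_natCast]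
  have TC : (∑ ψ : AddChar H ℂ, ∑ ψ' : AddChar H ℂ, ∑ χ : AddChar G ℂ, ∑ χ' : AddChar G ℂ,
      w1 * w1 * ‖(inner ℂ (charVec f ψ χ) (charVec f ψ' χ') : ℂ)‖ ^ 4)
      = (Fintype.card H : ℝ) * (d *
          (w1 * w1 * ((d ^ 2 * (Fintype.card H : ℝ) * (2 * d - 1)) / d ^ 4))) := by
    have inner2 : ∀ τ : AddChar H ℂ,
        (∑ χ : AddChar G ℂ, ∑ χ' : AddChar G ℂ,
          w1 * w1 * (‖charSum f τ (χ' - χ)‖ ^ 4 / d ^ 4))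
        = d * ∑ σ : AddChar G ℂ, w1 * w1 * (‖charSum f τ σ‖ ^ 4 / d ^ 4) := by
      intro τ
      rw [Finset.sum_congr rfl fun χ _ => reparam (fun σ => w1 * w1 * (‖charSum f τ σ‖ ^ 4 / d ^ 4)) χ]
      simp [AddChar.card_eq, d]
    have outer : ∀ ψ : AddChar H ℂ,
        (∑ ψ' : AddChar H ℂ, ∑ χ : AddChar G ℂ, ∑ χ' : AddChar G ℂ,
          w1 * w1 * (‖charSum f (ψ' - ψ) (χ' - χ)‖ ^ 4 / d ^ 4))
        = ∑ τ : AddChar H ℂ, d * ∑ σ : AddChar G ℂ, w1 * w1 * (‖charSum f τ σ‖ ^ 4 / d ^ 4) := by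
      intro ψ
      rw [Finset.sum_congr rfl fun ψ' _ => inner2 (ψ' - ψ)]
      exact reparam (fun τ => d * ∑ σ : AddChar G ℂ, w1 * w1 * (‖charSum f τ σ‖ ^ 4 / d ^ 4)) ψ
    rw [Finset.sum_congr rfl fun ψ _ => Finset.sum_congr rfl fun ψ' _ =>
      Finset.sum_congr rfl fun χ _ => Finset.sum_congr rfl fun χ' _ => TCa ψ ψ' χ χ']
    rw [Finset.sum_congr rfl fun ψ _ => outer ψ]
    rw [Finset.sum_const, Finset.card_univ, AddChar.card_eq, nsmul_eq_mul]
    congr 1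
    rw [← Finset.mul_sum]
    congr 1
    have := moment_four f hf
    calc ∑ τ : AddChar H ℂ, ∑ σ : AddChar G ℂ, w1 * w1 * (‖charSum f τ σ‖ ^ 4 / d ^ 4)
        = w1 * w1 * ((∑ τ : AddChar H ℂ, ∑ σ : AddChar G ℂ, ‖charSum f τ σ‖ ^ 4) / d ^ 4) := by
          simp only [Finset.mul_sum, Finset.sum_div]
      _ = _ := by rw [this]
  rw [TA, TB, TC]
  have hd' : d ≠ 0 := ne_of_gt hd0
  have hH' : (Fintype.card H : ℝ) ≠ 0 := ne_of_gt hH0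
  have hd1 : d + 1 ≠ 0 := by positivity
  show w0 * w0 * d + _ + _ = _
  simp only [w0, w1]
  field_simp
  ring
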